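/- Let N be a finite index set, b ∈ ℕ with |N| ≥ b + 1, (λ̌_j)_{j∈N} vectors in a real inner product space, B ⊆ N with |B| ≤ b, and let C be the (b+1)-th largest element of the multiset of norms {‖λ̌_j‖ : j ∈ N} (sorted in nonincreasing order, with multiplicity). Let λ_i be a further vector (the agent's own dual variable), τ ≥ 0 a clipping threshold, and (ẽ_j)_{j∈N∪{i}} nonnegative weights with Σ_{j∈N∪{i}} ẽ_j ≤ 1. For each j ∈ N∪{i} define v_j := min(1, τ/‖clip_C(λ̌_j) − λ_i‖)·(clip_C(λ̌_j) − λ_i) (with v_j := 0 when clip_C(λ̌_j) = λ_i, and with λ̌_i := λ_i). Then the SCC(ARC) output satisfies ‖Σ_{j∈N∪{i}} ẽ_j (λ_i + v_j)‖ ≤ max over j' ∈ (N∖B)∪{i} of ‖λ̌_{j'}‖. -/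

import Mathlib

/-- The clipping operator `clip_C(v) = min(1, C/‖v‖)·v` (with `clip_C(0) = 0`,
since in Lean `C/0 = 0`). -/
noncomputable def clip {E : Type*} [NormedAddCommGroup E] [InnerProductSpace ℝ E]
    (C : ℝ) (v : E) : E := min 1 (C / ‖v‖) • v

private lemma seg_bound {E : Type*} [NormedAddCommGroup E] [InnerProductSpace ℝ E]
    (x w : E) (t : ℝ) (h0 : 0 ≤ t) (h1 : t ≤ 1) :
    ‖x + t • (w - x)‖ ≤ max ‖x‖ ‖w‖ := by
  have hx : x + t • (w - x) = (1 - t) • x + t • w := by module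
  rw [hx]
  calc ‖(1 - t) • x + t • w‖ ≤ ‖(1 - t) • x‖ + ‖t • w‖ := norm_add_le _ _
    _ = (1 - t) * ‖x‖ + t * ‖w‖ := by
        rw [norm_smul, norm_smul, Real.norm_of_nonneg (by linarith),
          Real.norm_of_nonneg h0]
    _ ≤ (1 - t) * max ‖x‖ ‖w‖ + t * max ‖x‖ ‖w‖ := by
        apply add_le_add
        · exact mul_le_mul_of_nonneg_left (le_max_left _ _) (by linarith)
        · exact mul_le_mul_of_nonneg_left (le_max_right _ _) h0
    _ = max ‖x‖ ‖w‖ := by ring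

private lemma clip_norm_le {E : Type*} [NormedAddCommGroup E] [InnerProductSpace ℝ E]
    (C : ℝ) (hC : 0 ≤ C) (v : E) : ‖clip C v‖ ≤ ‖v‖ ∧ ‖clip C v‖ ≤ C := by
  have hmin : 0 ≤ min 1 (C / ‖v‖) := le_min one_pos.le (div_nonneg hC (norm_nonneg v))
  have hne : ‖clip C v‖ = min 1 (C / ‖v‖) * ‖v‖ := by
    rw [clip, norm_smul, Real.norm_of_nonneg hmin]
  rw [hne]
  constructor
  · nlinarith [min_le_left 1 (C / ‖v‖), norm_nonneg v]
  · rcases eq_or_lt_of_le (norm_nonneg v) with h | h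
    · simp [← h, hC]
    · calc min 1 (C / ‖v‖) * ‖v‖ ≤ (C / ‖v‖) * ‖v‖ :=
            mul_le_mul_of_nonneg_right (min_le_right _ _) (norm_nonneg v)
        _ = C := div_mul_cancel₀ _ h.ne'

private lemma count_ge_of_quantile {ι : Type*} [DecidableEq ι]
    (N : Finset ι) (b : ℕ) (hNb : b + 1 ≤ N.card)
    (f : ι → ℝ) (C : ℝ)
    (hC : C = ((N.val.map f).sort (· ≤ ·)).getD (N.card - 1 - b) 0) :
    b + 1 ≤ (N.filter fun j => C ≤ f j).card := by
  set l := (N.val.map f).sort (· ≤ ·) with hl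
  have hlen : l.length = N.card := by
    rw [hl, Multiset.length_sort, Multiset.card_map]; rfl
  set k := N.card - 1 - b with hk
  have hkl : k < l.length := by omega
  have hCk : C = l[k] := by
    rw [hC, List.getD_eq_getElem?_getD, List.getElem?_eq_getElem hkl]; rfl
  have hsorted : l.Pairwise (· ≤ ·) := Multiset.pairwise_sort _ _
  have hdrop : ∀ x ∈ l.drop k, C ≤ x := by
    intro x hx
    obtain ⟨n, hn, hxn⟩ := List.mem_iff_getElem.1 hx
    rw [List.getElem_drop] at hxn
    subst hxn
    rw [hCk]
    have hn' : k + n < l.length := by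
      rw [List.length_drop] at hn; omega
    exact hsorted.rel_get_of_le (a := ⟨k, hkl⟩) (b := ⟨k + n, hn'⟩) (by simp)
  have hcount : b + 1 ≤ l.countP (fun x => decide (C ≤ x)) := by
    have hsub : (l.drop k).Sublist l := List.drop_sublist _ _
    have h1 : (l.drop k).countP (fun x => decide (C ≤ x)) = (l.drop k).length :=
      List.countP_eq_length.2 fun a ha => by simpa using hdrop a ha
    have h2 : (l.drop k).length = b + 1 := by rw [List.length_drop, hlen]; omega
    calc b + 1 = (l.drop k).countP (fun x => decide (C ≤ x)) := by rw [h1, h2]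
      _ ≤ l.countP _ := hsub.countP_le
  have hcoe : (l : Multiset ℝ) = N.val.map f := Multiset.sort_eq _ _
  have heq : Multiset.countP (fun x => C ≤ x) (N.val.map f)
      = (N.filter fun j => C ≤ f j).card := by
    rw [Multiset.countP_map]; rfl
  rw [← heq, ← hcoe, Multiset.coe_countP]
  exact hcount

/-- **The self-centered clipping rule SCC composed with adaptive robust
clipping ARC satisfies the norm condition (Property 2):** the output norm is
bounded by the maximal norm among the agent's own dual variable `lamc i` and
the benign neighbors' dual variables. -/
theorem scc_arc_norm_bound
    {E : Type*} [NormedAddCommGroup E] [InnerProductSpace ℝ E]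
    {ι : Type*} [DecidableEq ι]
    (N : Finset ι) (b : ℕ) (hNb : b + 1 ≤ N.card)
    (lamc : ι → E)
    (B : Finset ι) (hBN : B ⊆ N) (hB : B.card ≤ b)
    (C : ℝ)
    (hC : C = ((N.val.map fun j => ‖lamc j‖).sort (· ≤ ·)).getD
        (N.card - 1 - b) 0)
    (i : ι) (hi : i ∉ N)
    (τ : ℝ) (hτ : 0 ≤ τ)
    (e : ι → ℝ) (he : ∀ j ∈ insert i N, 0 ≤ e j)
    (hesum : ∑ j ∈ insert i N, e j ≤ 1) :
    ‖∑ j ∈ insert i N, e j •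
        (lamc i
          + min 1 (τ / ‖clip C (lamc j) - lamc i‖) • (clip C (lamc j) - lamc i))‖
      ≤ sSup ((fun j' => ‖lamc j'‖) '' ((insert i (N \ B) : Finset ι) : Set ι)) := by
  set M := sSup ((fun j' => ‖lamc j'‖) '' ((insert i (N \ B) : Finset ι) : Set ι)) with hM
  have hbdd : BddAbove ((fun j' => ‖lamc j'‖) '' ((insert i (N \ B) : Finset ι) : Set ι)) :=
    ((insert i (N \ B) : Finset ι).finite_toSet.image _).bddAbove
  have hmem : ∀ j ∈ insert i (N \ B), ‖lamc j‖ ≤ M := by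
    intro j hj
    exact le_csSup hbdd ⟨j, by simpa using hj, rfl⟩
  -- C ≥ 0
  have hC0 : 0 ≤ C := by
    set l := (N.val.map fun j => ‖lamc j‖).sort (· ≤ ·) with hl
    have hlen : l.length = N.card := by
      rw [hl, Multiset.length_sort, Multiset.card_map]; rfl
    have hkl : N.card - 1 - b < l.length := by omega
    have hCk : C = l[N.card - 1 - b] := by
      rw [hC, List.getD_eq_getElem?_getD, List.getElem?_eq_getElem hkl]; rfl
    have hmeml : l[N.card - 1 - b] ∈ (l : Multiset ℝ) := by
      exact_mod_cast List.getElem_mem hkl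
    rw [Multiset.sort_eq] at hmeml
    obtain ⟨j, _, hj⟩ := Multiset.mem_map.1 hmeml
    rw [hCk, ← hj]
    exact norm_nonneg _
  -- C ≤ M
  have hCM : C ≤ M := by
    have hcnt := count_ge_of_quantile N b hNb (fun j => ‖lamc j‖) C hC
    set S := N.filter fun j => C ≤ ‖lamc j‖ with hS
    have hne : (S \ B).Nonempty := by
      rw [← Finset.card_pos]
      have := Finset.le_card_sdiff B S
      omega
    obtain ⟨j, hj⟩ := hne
    have hjS : j ∈ S := (Finset.mem_sdiff.1 hj).1
    have hjB : j ∉ B := (Finset.mem_sdiff.1 hj).2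
    have hjN : j ∈ N := Finset.mem_filter.1 hjS |>.1
    have hCj : C ≤ ‖lamc j‖ := (Finset.mem_filter.1 hjS).2
    exact hCj.trans (hmem j (Finset.mem_insert_of_mem (Finset.mem_sdiff.2 ⟨hjN, hjB⟩)))
  have hiM : ‖lamc i‖ ≤ M := hmem i (Finset.mem_insert_self _ _)
  have hM0 : 0 ≤ M := le_trans (norm_nonneg _) hiM
  -- per-term bound
  have hterm : ∀ j ∈ insert i N,
      ‖lamc i + min 1 (τ / ‖clip C (lamc j) - lamc i‖) • (clip C (lamc j) - lamc i)‖ ≤ M := by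
    intro j hj
    set t := min 1 (τ / ‖clip C (lamc j) - lamc i‖) with ht
    have ht0 : 0 ≤ t := le_min one_pos.le (div_nonneg hτ (norm_nonneg _))
    have ht1 : t ≤ 1 := min_le_left _ _
    have hseg := seg_bound (lamc i) (clip C (lamc j)) t ht0 ht1
    refine hseg.trans (max_le hiM ?_)
    rcases Finset.mem_insert.1 hj with rfl | hjN
    · exact ((clip_norm_le C hC0 (lamc j)).1).trans hiM
    · by_cases hjB : j ∈ B
      · exact ((clip_norm_le C hC0 (lamc j)).2).trans hCM
      · exact ((clip_norm_le C hC0 (lamc j)).1).trans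
          (hmem j (Finset.mem_insert_of_mem (Finset.mem_sdiff.2 ⟨hjN, hjB⟩)))
  calc ‖∑ j ∈ insert i N, e j •
        (lamc i + min 1 (τ / ‖clip C (lamc j) - lamc i‖) • (clip C (lamc j) - lamc i))‖
      ≤ ∑ j ∈ insert i N, ‖e j •
        (lamc i + min 1 (τ / ‖clip C (lamc j) - lamc i‖) • (clip C (lamc j) - lamc i))‖ :=
        norm_sum_le _ _
    _ ≤ ∑ j ∈ insert i N, e j * M := by
        refine Finset.sum_le_sum fun j hj => ?_
        rw [norm_smul, Real.norm_of_nonneg (he j hj)]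
        exact mul_le_mul_of_nonneg_left (hterm j hj) (he j hj)
    _ = (∑ j ∈ insert i N, e j) * M := (Finset.sum_mul _ _ _).symm
    _ ≤ 1 * M := mul_le_mul_of_nonneg_right hesum hM0
    _ = M := one_mul M
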